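/- Let Δ : [0,1] → ℝ be measurable with Δ(u) ≥ Δ* > 0 for all u, and suppose there is a constant C > 0 such that for all x > 0 the Lebesgue measure of {u ∈ [0,1] : Δ(u) ≤ x} is at most C·x. Then for any α > 1, ∫₀¹ Δ(u)^(−α) du ≤ (C·α/(α−1)) · Δ*^(−(α−1)). -/

import Mathlib

open MeasureTheory Set

/-- Spectral gap integral bound: under the measure condition
`μ({u ∈ [0,1] : Δ(u) ≤ x}) ≤ C·x`, the gap-weighted integral satisfies
`∫₀¹ Δ(u)^(−α) du ≤ (C·α/(α−1)) · Δ*^(−(α−1))` for any `α > 1`. -/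
theorem gap_integral_bound (Δ : ℝ → ℝ) (Δstar C α : ℝ)
    (hmeas : Measurable Δ)
    (hlow : ∀ u ∈ Icc (0:ℝ) 1, Δstar ≤ Δ u)
    (hΔstar : 0 < Δstar) (hC : 0 < C)
    (hmc : ∀ x > (0:ℝ), (volume {u ∈ Icc (0:ℝ) 1 | Δ u ≤ x}).toReal ≤ C * x)
    (hα : 1 < α) :
    ∫ u in (0:ℝ)..1, (Δ u) ^ (-α) ≤ (C * α / (α - 1)) * Δstar ^ (-(α - 1)) := by
  have hα0 : (0:ℝ) < α := lt_trans one_pos hα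
  have hα1 : (0:ℝ) < α - 1 := by linarith
  set f : ℝ → ℝ := fun u => (Δ u) ^ (-α) with hf
  set μ : Measure ℝ := volume.restrict (Ioc (0:ℝ) 1) with hμ
  set T : ℝ := Δstar ^ (-α) with hT
  have hT0 : 0 < T := Real.rpow_pos_of_pos hΔstar _
  have hfmeas : Measurable f := by fun_prop
  have hae : ∀ᵐ u ∂μ, u ∈ Ioc (0:ℝ) 1 := ae_restrict_mem measurableSet_Ioc
  have hlow' : ∀ u ∈ Ioc (0:ℝ) 1, Δstar ≤ Δ u := fun u hu => hlow u (Ioc_subset_Icc_self hu)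
  have hbound : ∀ u ∈ Ioc (0:ℝ) 1, f u ≤ T := fun u hu =>
    Real.rpow_le_rpow_of_nonpos hΔstar (hlow' u hu) (neg_nonpos.mpr hα0.le)
  have hnn : ∀ u ∈ Ioc (0:ℝ) 1, 0 ≤ f u := fun u hu =>
    Real.rpow_nonneg (le_trans hΔstar.le (hlow' u hu)) _
  have hfint : Integrable f μ := by
    refine (integrable_const T).mono' hfmeas.aestronglyMeasurable ?_
    filter_upwards [hae] with u hu
    rw [Real.norm_eq_abs, abs_of_nonneg (hnn u hu)]
    exact hbound u hu
  have hfnn : 0 ≤ᵐ[μ] f := by filter_upwards [hae] with u hu using hnn u hu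
  have key : ∫ u in (0:ℝ)..1, f u = ∫ t in Ioi (0:ℝ),
      ENNReal.toReal (μ {a : ℝ | t < f a}) := by
    rw [intervalIntegral.integral_of_le zero_le_one]
    exact hfint.integral_eq_integral_meas_lt hfnn
  set g : ℝ → ℝ := (Ioc (0:ℝ) T).indicator (fun t => C * t ^ (-(1/α))) with hg
  have hexp : (-1:ℝ) < -(1/α) := by
    have : 1/α < 1 := by
      rw [div_lt_one hα0]; exact hα
    linarith
  have hbase_int : IntegrableOn (fun t : ℝ => C * t ^ (-(1/α))) (Ioc (0:ℝ) T) := by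
    have := (intervalIntegral.intervalIntegrable_rpow' hexp (a := 0) (b := T))
    rw [intervalIntegrable_iff_integrableOn_Ioc_of_le hT0.le] at this
    exact this.const_mul C
  have hgint : Integrable g (volume.restrict (Ioi (0:ℝ))) := by
    rw [hg, integrable_indicator_iff measurableSet_Ioc]
    rw [IntegrableOn, Measure.restrict_restrict measurableSet_Ioc,
      inter_eq_left.mpr (Ioc_subset_Ioi_self)]
    exact hbase_int
  have hmset : ∀ t : ℝ, MeasurableSet {a : ℝ | t < f a} :=
    fun t => measurableSet_lt measurable_const hfmeas
  have hptwise : ∀ t ∈ Ioi (0:ℝ), ENNReal.toReal (μ {a : ℝ | t < f a}) ≤ g t := by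
    intro t ht
    have ht0 : (0:ℝ) < t := ht
    rw [hμ, Measure.restrict_apply (hmset t)]
    by_cases htT : t ≤ T
    · -- t ∈ Ioc 0 T
      have hgt : g t = C * t ^ (-(1/α)) := by
        rw [hg, indicator_of_mem (mem_Ioc.mpr ⟨ht0, htT⟩)]
      set x : ℝ := t ^ (-(1/α)) with hx
      have hx0 : 0 < x := Real.rpow_pos_of_pos ht0 _
      have hsub : {a : ℝ | t < f a} ∩ Ioc (0:ℝ) 1 ⊆ {u ∈ Icc (0:ℝ) 1 | Δ u ≤ x} := by
        rintro a ⟨ha1, ha2⟩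
        rw [mem_setOf_eq] at ha1
        rw [mem_sep_iff]
        refine ⟨Ioc_subset_Icc_self ha2, ?_⟩
        have hΔa : 0 < Δ a := lt_of_lt_of_le hΔstar (hlow' a ha2)
        have hfa : 0 < f a := lt_trans ht0 ha1
        have hneg : -(1/α) < 0 := by
          have h1 : 0 < 1/α := by positivity
          linarith
        have hlt : (f a) ^ (-(1/α)) < t ^ (-(1/α)) :=
          (Real.rpow_lt_rpow_iff_of_neg hfa ht0 hneg).mpr ha1
        have heq : (f a) ^ (-(1/α)) = Δ a := by
          show (Δ a ^ (-α)) ^ (-(1/α)) = Δ a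
          rw [← Real.rpow_mul hΔa.le]
          have hone : (-α) * (-(1/α)) = 1 := by field_simp
          rw [hone, Real.rpow_one]
        rw [heq] at hlt
        exact hlt.le
      have hfin : volume {u ∈ Icc (0:ℝ) 1 | Δ u ≤ x} ≠ ⊤ := by
        refine ne_top_of_le_ne_top ?_ (measure_mono (sep_subset _ _))
        simp [Real.volume_Icc]
      calc ENNReal.toReal (volume ({a : ℝ | t < f a} ∩ Ioc (0:ℝ) 1))
          ≤ ENNReal.toReal (volume {u ∈ Icc (0:ℝ) 1 | Δ u ≤ x}) :=
            ENNReal.toReal_mono hfin (measure_mono hsub)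
        _ ≤ C * x := hmc x hx0
        _ = g t := hgt.symm
    · -- t > T : the set is empty
      have : {a : ℝ | t < f a} ∩ Ioc (0:ℝ) 1 = ∅ := by
        ext a
        simp only [mem_inter_iff, mem_setOf_eq, mem_empty_iff_false, iff_false, not_and]
        intro ha1 ha2
        exact absurd (lt_of_le_of_lt (hbound a ha2) (lt_of_not_ge htT)) (not_lt.mpr ha1.le)
      rw [this]
      simp only [measure_empty, ENNReal.toReal_zero]
      rw [hg]
      exact indicator_nonneg (fun s hs => mul_nonneg hC.le (Real.rpow_nonneg hs.1.le _)) t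
  have hmono : ∫ t in Ioi (0:ℝ), ENNReal.toReal (μ {a : ℝ | t < f a}) ≤
      ∫ t in Ioi (0:ℝ), g t := by
    refine integral_mono_of_nonneg ?_ hgint ?_
    · exact Filter.Eventually.of_forall (fun t => ENNReal.toReal_nonneg)
    · filter_upwards [ae_restrict_mem measurableSet_Ioi] with t ht using hptwise t ht
  have hgval : ∫ t in Ioi (0:ℝ), g t = (C * α / (α - 1)) * Δstar ^ (-(α - 1)) := by
    rw [hg, integral_indicator measurableSet_Ioc,
      Measure.restrict_restrict measurableSet_Ioc,
      inter_eq_left.mpr (Ioc_subset_Ioi_self)]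
    rw [← intervalIntegral.integral_of_le hT0.le]
    rw [intervalIntegral.integral_const_mul, integral_rpow (Or.inl hexp)]
    have he0 : -(1/α) + 1 = (α - 1)/α := by field_simp; ring
    have hzero : (0:ℝ) ^ (-(1/α) + 1) = 0 := by
      rw [Real.zero_rpow]
      rw [he0]
      positivity
    rw [hzero, sub_zero]
    have hTval : T ^ (-(1/α) + 1) = Δstar ^ (-(α - 1)) := by
      rw [hT, ← Real.rpow_mul hΔstar.le]
      congr 1
      field_simp
      ring
    rw [hTval, he0]
    field_simp
  calc ∫ u in (0:ℝ)..1, (Δ u) ^ (-α) = ∫ t in Ioi (0:ℝ),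
        ENNReal.toReal (μ {a : ℝ | t < f a}) := key
    _ ≤ ∫ t in Ioi (0:ℝ), g t := hmono
    _ = (C * α / (α - 1)) * Δstar ^ (-(α - 1)) := hgval
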